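/- arXiv:1704.04040 — 2 statements merged into one kernel-verified Lean document; each statement's English description precedes it below -/
import Mathlib

section
/- In the abrupt-change setting g(y,z) = ν₁(z) for y ≤ θ₀ and g(y,z) = ν₂(z) for y > θ₀ with 0 < θ₀ < 1, set V_ε = sup_{|z| ≥ ε} |ν₁(z) − ν₂(z)| and assume 0 < V_ε < ∞. Then for every θ with θ₀ < θ ≤ 1, the quantity 𝒟^(ε)(θ) := sup_{|z| ≥ ε} sup_{0 ≤ κ ≤ θ' ≤ θ} |D(κ,θ',z)| equals V_ε · θ₀ · (1 − θ₀/θ), and 𝒟^(ε)(θ) = 0 for θ ≤ θ₀. -/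
open MeasureTheory

/-- The measure of time variation `D(κ,θ,z)`. -/
noncomputable def Dtv (g : ℝ → ℝ → ℝ) (κ θ z : ℝ) : ℝ :=
  (∫ y in (0:ℝ)..κ, g y z) - κ / θ * ∫ y in (0:ℝ)..θ, g y z

lemma step_integrable (a b θ₀ : ℝ) (u v : ℝ) :
    IntervalIntegrable (fun y => if y ≤ θ₀ then a else b) volume u v := by
  have hm : Measurable (fun y => if y ≤ θ₀ then a else b) :=
    Measurable.piecewise measurableSet_Iic measurable_const measurable_const
  apply IntegrableOn.intervalIntegrable
  refine Integrable.mono' (g := fun _ => max |a| |b|)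
    (integrableOn_const measure_Icc_lt_top.ne) hm.aestronglyMeasurable.restrict ?_
  filter_upwards with x
  by_cases h : x ≤ θ₀ <;> simp [h, le_max_left, le_max_right]

lemma step_int (a b θ₀ : ℝ) (h0 : 0 < θ₀) {t : ℝ} (ht : 0 ≤ t) :
    (∫ y in (0:ℝ)..t, if y ≤ θ₀ then a else b)
      = if t ≤ θ₀ then t * a else θ₀ * a + (t - θ₀) * b := by
  by_cases h : t ≤ θ₀
  · rw [if_pos h]
    rw [show (∫ y in (0:ℝ)..t, if y ≤ θ₀ then a else b) = ∫ y in (0:ℝ)..t, a from ?_,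
      intervalIntegral.integral_const, smul_eq_mul, sub_zero]
    apply intervalIntegral.integral_congr
    intro y hy
    rw [Set.uIcc_of_le ht] at hy
    simp [hy.2.trans h]
  · push_neg at h
    rw [if_neg (not_le.2 h)]
    rw [← intervalIntegral.integral_add_adjacent_intervals (b := θ₀)
      (step_integrable a b θ₀ 0 θ₀) (step_integrable a b θ₀ θ₀ t)]
    congr 1
    · rw [show (∫ y in (0:ℝ)..θ₀, if y ≤ θ₀ then a else b) = ∫ y in (0:ℝ)..θ₀, a from ?_,
        intervalIntegral.integral_const, smul_eq_mul, sub_zero]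
      apply intervalIntegral.integral_congr
      intro y hy
      rw [Set.uIcc_of_le h0.le] at hy
      simp [hy.2]
    · rw [intervalIntegral.integral_of_le h.le,
        setIntegral_congr_fun measurableSet_Ioc (g := fun _ => b) ?_]
      · simp [Real.volume_Ioc, ENNReal.toReal_ofReal (sub_nonneg.2 h.le), mul_comm, h.le]
      · intro y hy
        simp [not_le.2 hy.1]

lemma Dtv_eq (ν₁ ν₂ : ℝ → ℝ) (θ₀ : ℝ) (h0 : 0 < θ₀) {κ θ' : ℝ} (z : ℝ)
    (hκ : 0 ≤ κ) (hκθ : κ ≤ θ') :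
    Dtv (fun y w => if y ≤ θ₀ then ν₁ w else ν₂ w) κ θ' z
      = (if θ' ≤ θ₀ then 0 else
          if κ ≤ θ₀ then κ * (1 - θ₀ / θ') else θ₀ * (1 - κ / θ')) * (ν₁ z - ν₂ z) := by
  have hθ' : 0 ≤ θ' := hκ.trans hκθ
  unfold Dtv
  rw [step_int _ _ _ h0 hκ, step_int _ _ _ h0 hθ']
  by_cases h : θ' ≤ θ₀
  · rw [if_pos h, if_pos h, if_pos (hκθ.trans h)]
    rcases eq_or_lt_of_le hθ' with h' | h'
    · have : κ = 0 := le_antisymm (hκθ.trans h'.symm.le) hκ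
      simp [this, ← h']
    · field_simp; ring
  · rw [if_neg h, if_neg h]
    push_neg at h
    have hθ'pos : (0:ℝ) < θ' := h0.trans h
    have hθ0 : θ' ≠ 0 := ne_of_gt hθ'pos
    by_cases h2 : κ ≤ θ₀
    · rw [if_pos h2, if_pos h2]; field_simp; ring
    · rw [if_neg h2, if_neg h2]; field_simp; ring

lemma coeff_bound (θ₀ θ : ℝ) (h0 : 0 < θ₀) (hθ : θ₀ < θ) {κ θ' : ℝ}
    (hκ : 0 ≤ κ) (hκθ : κ ≤ θ') (hθ'θ : θ' ≤ θ) :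
    (0 ≤ (if θ' ≤ θ₀ then 0 else
          if κ ≤ θ₀ then κ * (1 - θ₀ / θ') else θ₀ * (1 - κ / θ'))) ∧
    (if θ' ≤ θ₀ then 0 else
          if κ ≤ θ₀ then κ * (1 - θ₀ / θ') else θ₀ * (1 - κ / θ'))
        ≤ θ₀ * (1 - θ₀ / θ) := by
  have hθpos : (0:ℝ) < θ := h0.trans hθ
  have hcpos : 0 ≤ θ₀ * (1 - θ₀ / θ) := by
    have : θ₀ / θ ≤ 1 := (div_le_one hθpos).2 hθ.le
    nlinarith
  by_cases h : θ' ≤ θ₀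
  · simp [h, hcpos]
  · rw [if_neg h]
    push_neg at h
    have hθ'pos : 0 < θ' := h0.trans h
    have key : θ₀ / θ ≤ θ₀ / θ' := by
      apply div_le_div_of_nonneg_left h0.le hθ'pos hθ'θ
    have h1' : 0 ≤ 1 - θ₀ / θ' := by
      have : θ₀ / θ' ≤ 1 := (div_le_one hθ'pos).2 h.le
      linarith
    by_cases h2 : κ ≤ θ₀
    · rw [if_pos h2]
      constructor
      · positivity
      · have : κ * (1 - θ₀ / θ') ≤ θ₀ * (1 - θ₀ / θ') := by nlinarith
        calc κ * (1 - θ₀ / θ') ≤ θ₀ * (1 - θ₀ / θ') := this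
          _ ≤ θ₀ * (1 - θ₀ / θ) := by nlinarith
    · rw [if_neg h2]
      push_neg at h2
      have hk1 : κ / θ' ≤ 1 := (div_le_one hθ'pos).2 hκθ
      constructor
      · nlinarith
      · have : θ₀ / θ' ≤ κ / θ' := by
          gcongr
        calc θ₀ * (1 - κ / θ') ≤ θ₀ * (1 - θ₀ / θ') := by nlinarith
          _ ≤ θ₀ * (1 - θ₀ / θ) := by nlinarith


/-- In the abrupt-change setting, `𝒟^(ε)(θ) = V_ε θ₀ (1 - θ₀/θ)` for `θ > θ₀` and
`𝒟^(ε)(θ) = 0` for `θ ≤ θ₀`. -/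
theorem stmt_3 (ν₁ ν₂ : ℝ → ℝ) (θ₀ ε : ℝ) (h0 : 0 < θ₀) (h1 : θ₀ < 1) (hε : 0 < ε)
    (M : ℝ) (hM : ∀ z : ℝ, ε ≤ |z| → |ν₁ z| ≤ M ∧ |ν₂ z| ≤ M)
    (hV : 0 < sSup {v : ℝ | ∃ z : ℝ, ε ≤ |z| ∧ v = |ν₁ z - ν₂ z|}) :
    (∀ θ : ℝ, θ₀ < θ → θ ≤ 1 →
      sSup {x : ℝ | ∃ z κ θ' : ℝ, ε ≤ |z| ∧ 0 ≤ κ ∧ κ ≤ θ' ∧ θ' ≤ θ ∧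
          x = |Dtv (fun y w => if y ≤ θ₀ then ν₁ w else ν₂ w) κ θ' z|}
        = (sSup {v : ℝ | ∃ z : ℝ, ε ≤ |z| ∧ v = |ν₁ z - ν₂ z|}) * θ₀ * (1 - θ₀ / θ)) ∧
    (∀ θ : ℝ, 0 ≤ θ → θ ≤ θ₀ →
      sSup {x : ℝ | ∃ z κ θ' : ℝ, ε ≤ |z| ∧ 0 ≤ κ ∧ κ ≤ θ' ∧ θ' ≤ θ ∧
          x = |Dtv (fun y w => if y ≤ θ₀ then ν₁ w else ν₂ w) κ θ' z|} = 0) := by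
  set S : Set ℝ := {v : ℝ | ∃ z : ℝ, ε ≤ |z| ∧ v = |ν₁ z - ν₂ z|} with hS
  have hSne : S.Nonempty := ⟨|ν₁ ε - ν₂ ε|, ε, by rw [abs_of_pos hε], rfl⟩
  have hSbdd : BddAbove S := by
    refine ⟨2 * M, ?_⟩
    rintro v ⟨z, hz, rfl⟩
    obtain ⟨hm1, hm2⟩ := hM z hz
    calc |ν₁ z - ν₂ z| ≤ |ν₁ z| + |ν₂ z| := abs_sub _ _
      _ ≤ 2 * M := by linarith
  constructor
  · intro θ hθ hθ1
    set c : ℝ := θ₀ * (1 - θ₀ / θ) with hc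
    have hθpos : (0:ℝ) < θ := h0.trans hθ
    have hcpos : 0 < c := by
      have : θ₀ / θ < 1 := (div_lt_one hθpos).2 hθ
      have : 0 < 1 - θ₀ / θ := by linarith
      positivity
    set T : Set ℝ := {x : ℝ | ∃ z κ θ' : ℝ, ε ≤ |z| ∧ 0 ≤ κ ∧ κ ≤ θ' ∧ θ' ≤ θ ∧
          x = |Dtv (fun y w => if y ≤ θ₀ then ν₁ w else ν₂ w) κ θ' z|} with hT
    have hTub : ∀ x ∈ T, x ≤ c * sSup S := by
      rintro x ⟨z, κ, θ', hz, hκ, hκθ, hθ'θ, rfl⟩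
      rw [Dtv_eq ν₁ ν₂ θ₀ h0 z hκ hκθ, abs_mul]
      obtain ⟨hcn, hcb⟩ := coeff_bound θ₀ θ h0 hθ hκ hκθ hθ'θ
      rw [abs_of_nonneg hcn]
      have hv : |ν₁ z - ν₂ z| ≤ sSup S := le_csSup hSbdd ⟨z, hz, rfl⟩
      have habs : (0:ℝ) ≤ |ν₁ z - ν₂ z| := abs_nonneg _
      calc _ ≤ c * |ν₁ z - ν₂ z| := by nlinarith
        _ ≤ c * sSup S := by nlinarith
    have hTne : T.Nonempty :=
      ⟨_, ε, 0, 0, by rw [abs_of_pos hε], le_refl 0, le_refl 0, hθpos.le, rfl⟩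
    have hTbdd : BddAbove T := ⟨c * sSup S, hTub⟩
    apply le_antisymm
    · rw [show sSup S * θ₀ * (1 - θ₀ / θ) = c * sSup S by rw [hc]; ring]
      exact csSup_le hTne hTub
    · rw [show sSup S * θ₀ * (1 - θ₀ / θ) = c * sSup S by rw [hc]; ring]
      rw [mul_comm, ← le_div_iff₀ hcpos]
      apply csSup_le hSne
      rintro v ⟨z, hz, rfl⟩
      rw [le_div_iff₀ hcpos, mul_comm]
      apply le_csSup hTbdd
      refine ⟨z, θ₀, θ, hz, h0.le, hθ.le, le_refl θ, ?_⟩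
      rw [Dtv_eq ν₁ ν₂ θ₀ h0 z h0.le hθ.le, if_neg (not_le.2 hθ), if_pos (le_refl θ₀),
        abs_mul, abs_of_nonneg hcpos.le]
  · intro θ hθ0 hθθ₀
    have hTeq : {x : ℝ | ∃ z κ θ' : ℝ, ε ≤ |z| ∧ 0 ≤ κ ∧ κ ≤ θ' ∧ θ' ≤ θ ∧
          x = |Dtv (fun y w => if y ≤ θ₀ then ν₁ w else ν₂ w) κ θ' z|} = {0} := by
      apply Set.eq_singleton_iff_unique_mem.2
      constructor
      · refine ⟨ε, 0, 0, by rw [abs_of_pos hε], le_refl 0, le_refl 0, hθ0, ?_⟩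
        rw [Dtv_eq ν₁ ν₂ θ₀ h0 ε (le_refl 0) (le_refl 0), if_pos h0.le]
        simp
      · rintro x ⟨z, κ, θ', hz, hκ, hκθ, hθ'θ, rfl⟩
        rw [Dtv_eq ν₁ ν₂ θ₀ h0 z hκ hκθ, if_pos (hθ'θ.trans hθθ₀)]
        simp
    rw [hTeq, csSup_singleton]
end

section
/- Let 0 < θ₀ < 1, k ≥ 1, and for θ ∈ (θ₀, 1) let κ₀(θ) = θ₀ + (θ − θ₀)^{1+1/k} / (θ(k+1))^{1/k} and h_k(κ) = θ(κ−θ₀)^{k+1} − κ(θ−θ₀)^{k+1}. Then (1/θ)·|h_k(κ₀(θ))| = (θ₀/θ)(θ−θ₀)^{k+1} + O((θ−θ₀)^{k+2+1/k}) as θ ↓ θ₀; in particular there exist λ > 0 and a constant K such that | (1/θ) sup_{κ ∈ (θ₀,θ]} |h_k(κ)| − (θ−θ₀)^{k+1} | ≤ K (θ−θ₀)^{k+2} for all θ ∈ (θ₀, θ₀+λ]. -/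
lemma pow_tangent (n : ℕ) (a b : ℝ) (ha : 0 ≤ a) (hb : 0 ≤ b) :
    a ^ (n + 1) + ((n:ℝ) + 1) * a ^ n * (b - a) ≤ b ^ (n + 1) := by
  induction n with
  | zero => simp
  | succ n ih =>
      have h1 := mul_le_mul_of_nonneg_left ih hb
      have h2 : (0:ℝ) ≤ ((n:ℝ)+1) * a ^ n * (b - a) ^ 2 := by positivity
      have e : b * (a ^ (n+1) + ((n:ℝ)+1) * a ^ n * (b - a))
          = a ^ (n+2) + ((n:ℝ)+2) * a ^ (n+1) * (b-a) + ((n:ℝ)+1) * a ^ n * (b-a)^2 := by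
        ring
      push_cast
      have g : a ^ (n+2) + ((n:ℝ)+2) * a ^ (n+1) * (b - a) ≤ b ^ (n+2) := by
        calc a ^ (n+2) + ((n:ℝ)+2) * a ^ (n+1) * (b - a)
            ≤ a ^ (n+2) + ((n:ℝ)+2) * a ^ (n+1) * (b-a) + ((n:ℝ)+1) * a ^ n * (b-a)^2 := by linarith
          _ = b * (a ^ (n+1) + ((n:ℝ)+1) * a ^ n * (b - a)) := e.symm
          _ ≤ b * b ^ (n+1) := h1
          _ = b ^ (n+2) := by ring
      convert g using 3 <;> push_cast <;> ring

set_option maxHeartbeats 2000000 in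
/-- Asymptotic expansion near the gradual change point:
`(1/θ)|h_k(κ₀(θ))| = (θ₀/θ)(θ-θ₀)^{k+1} + O((θ-θ₀)^{k+2+1/k})`, and
`(1/θ) sup_{κ ∈ (θ₀,θ]} |h_k(κ)| = (θ-θ₀)^{k+1} + O((θ-θ₀)^{k+2})` as `θ ↓ θ₀`. -/
theorem stmt_18 (θ₀ : ℝ) (k : ℕ) (h0 : 0 < θ₀) (h1 : θ₀ < 1) (hk : 1 ≤ k) :
    ∃ lam Kc : ℝ, 0 < lam ∧
      ∀ θ : ℝ, θ₀ < θ → θ ≤ θ₀ + lam → θ < 1 →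
        (|1 / θ *
            |θ * ((θ₀ + (θ - θ₀) ^ ((1:ℝ) + 1 / k) / (θ * ((k:ℝ) + 1)) ^ ((1:ℝ) / k)) - θ₀) ^ (k + 1)
              - (θ₀ + (θ - θ₀) ^ ((1:ℝ) + 1 / k) / (θ * ((k:ℝ) + 1)) ^ ((1:ℝ) / k)) * (θ - θ₀) ^ (k + 1)|
            - θ₀ / θ * (θ - θ₀) ^ (k + 1)|
          ≤ Kc * (θ - θ₀) ^ ((k : ℝ) + 2 + 1 / k)) ∧
        |1 / θ *
            sSup ((fun κ => |θ * (κ - θ₀) ^ (k + 1) - κ * (θ - θ₀) ^ (k + 1)|) '' Set.Ioc θ₀ θ)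
            - (θ - θ₀) ^ (k + 1)|
          ≤ Kc * (θ - θ₀) ^ (k + 2) := by
  refine ⟨θ₀, 2 / θ₀ ^ 2, h0, fun θ hθl hθu hθ1 => ?_⟩
  have hθ : 0 < θ := h0.trans hθl
  have hkR : (k:ℝ) ≠ 0 := Nat.cast_ne_zero.2 (by omega)
  have hk1 : (0:ℝ) < (k:ℝ) + 1 := by positivity
  set δ : ℝ := θ - θ₀ with hδdef
  have hδ : 0 < δ := by simp [hδdef]; linarith
  have hδθ : δ ≤ θ₀ := by simp [hδdef]; linarith
  set A : ℝ := θ * ((k:ℝ) + 1) with hAdef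
  have hA : 0 < A := by positivity
  set t : ℝ := δ ^ ((1:ℝ) + 1/k) / A ^ ((1:ℝ)/k) with htdef
  have ht : 0 < t := by
    apply div_pos (Real.rpow_pos_of_pos hδ _) (Real.rpow_pos_of_pos hA _)
  -- key1 : t^k = δ^(k+1)/A
  have key1 : t ^ k = δ ^ (k+1) / A := by
    rw [htdef, div_pow, ← Real.rpow_natCast (δ ^ ((1:ℝ) + 1/k)) k,
      ← Real.rpow_natCast (A ^ ((1:ℝ)/k)) k, ← Real.rpow_mul hδ.le, ← Real.rpow_mul hA.le]
    rw [show ((1:ℝ) + 1/k) * k = ((k+1:ℕ):ℝ) by push_cast; field_simp]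
    rw [show ((1:ℝ)/k) * k = 1 by field_simp]
    rw [Real.rpow_natCast, Real.rpow_one]
  have key1' : θ * (((k:ℝ)+1) * t ^ k) = δ ^ (k+1) := by
    rw [key1]; field_simp [hAdef]; ring
  -- t ≤ δ
  have htδ : t ≤ δ := by
    have h2 : t ^ k ≤ δ ^ k := by
      rw [key1, pow_succ]
      rw [div_le_iff₀ hA]
      have : δ ≤ A := by
        calc δ ≤ θ₀ := hδθ
          _ ≤ θ := hθl.le
          _ ≤ A := by rw [hAdef]; nlinarith
      nlinarith [pow_pos hδ k]
    exact le_of_pow_le_pow_left₀ (by omega) hδ.le h2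
  -- g and its properties
  set g : ℝ → ℝ := fun s => (θ₀ + s) * δ ^ (k+1) - θ * s ^ (k+1) with hgdef
  have hθeq : θ = θ₀ + δ := by rw [hδdef]; ring
  have hg0 : ∀ s : ℝ, 0 < s → s ≤ δ → 0 ≤ g s := by
    intro s hs hsδ
    have hsk : s ^ k ≤ δ ^ k := pow_le_pow_left₀ hs.le hsδ k
    simp only [hgdef]
    rw [hθeq, pow_succ, pow_succ]
    have hint1 : (θ₀ + δ) * s * s ^ k ≤ (θ₀ + δ) * s * δ ^ k :=
      mul_le_mul_of_nonneg_left hsk (by nlinarith)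
    have hint2 : 0 ≤ θ₀ * δ ^ k * (δ - s) :=
      mul_nonneg (mul_nonneg h0.le (pow_nonneg hδ.le k)) (by linarith)
    nlinarith [hint1, hint2]
  have hub : ∀ s : ℝ, 0 ≤ s → g s ≤ g t := by
    intro s hs
    have htan := mul_le_mul_of_nonneg_left (pow_tangent k t s ht.le hs) hθ.le
    simp only [hgdef]
    nlinarith [key1']
  have hgt0 : 0 ≤ g t := hg0 t ht htδ
  -- closed form of g t
  have hgt : g t = θ₀ * δ ^ (k+1) + ((k:ℝ)/((k:ℝ)+1)) * (t * δ ^ (k+1)) := by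
    have e : t ^ (k+1) = δ ^ (k+1) / A * t := by rw [pow_succ, key1]
    simp only [hgdef]
    rw [e, hAdef]
    field_simp
    ring
  have e4 : t * δ ^ (k+1) = δ ^ ((k:ℝ) + 2 + 1/k) / A ^ ((1:ℝ)/k) := by
    rw [htdef, div_mul_eq_mul_div, ← Real.rpow_natCast δ (k+1), ← Real.rpow_add hδ]
    congr 2
    push_cast; ring
  have hA1 : θ₀ ≤ A ^ ((1:ℝ)/k) := by
    have h5 : (θ₀ ^ k : ℝ) ≤ A := by
      have h5' : θ₀ ^ k ≤ θ₀ := pow_le_of_le_one h0.le h1.le (by omega)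
      calc (θ₀:ℝ) ^ k ≤ θ₀ := h5'
        _ ≤ θ := hθl.le
        _ ≤ A := by rw [hAdef]; nlinarith
    have h6 : ((θ₀ ^ k : ℝ)) ^ ((1:ℝ)/k) = θ₀ := by
      rw [← Real.rpow_natCast θ₀ k, ← Real.rpow_mul h0.le,
        show ((k:ℝ)) * (1/k) = 1 by field_simp, Real.rpow_one]
    rw [← h6]
    exact Real.rpow_le_rpow (by positivity) h5 (by positivity)
  have hrp : (0:ℝ) < δ ^ ((k:ℝ) + 2 + 1/k) := Real.rpow_pos_of_pos hδ _
  have h7 : t * δ ^ (k+1) ≤ δ ^ ((k:ℝ) + 2 + 1/k) / θ₀ := by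
    rw [e4]
    exact div_le_div_of_nonneg_left hrp.le h0 hA1
  have hApow : 0 < A ^ ((1:ℝ)/k) := Real.rpow_pos_of_pos hA _
  clear_value t A
  clear_value g
  clear_value δ
  constructor
  · -- first claim
    have habs : |θ * ((θ₀ + t) - θ₀) ^ (k+1) - (θ₀ + t) * δ ^ (k+1)| = g t := by
      rw [show (θ₀ + t) - θ₀ = t by ring, abs_of_nonpos (by simp only [hgdef] at hgt0; linarith)]
      simp only [hgdef]; ring
    rw [habs]
    have e8 : 1/θ * g t - θ₀/θ * δ ^ (k+1) = ((k:ℝ)/((k:ℝ)+1)) * (t * δ ^ (k+1)) / θ := by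
      rw [hgt, eq_div_iff hθ.ne']
      field_simp
      ring
    rw [e8, abs_of_nonneg (by positivity)]
    have hT : 0 ≤ t * δ ^ (k+1) := by positivity
    have hk2 : ((k:ℝ)/((k:ℝ)+1)) ≤ 1 := by rw [div_le_one hk1]; linarith
    have hc1 : ((k:ℝ)/((k:ℝ)+1)) * (t * δ ^ (k+1)) ≤ δ ^ ((k:ℝ) + 2 + 1/k) / θ₀ :=
      (mul_le_of_le_one_left hT hk2).trans h7
    have hfrac : ((k:ℝ)/((k:ℝ)+1)) * (t * δ ^ (k+1)) / θ ≤ (δ ^ ((k:ℝ) + 2 + 1/k) / θ₀) / θ₀ :=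
      div_le_div₀ (by positivity) hc1 h0 hθl.le
    refine hfrac.trans ?_
    rw [div_div, div_le_iff₀ (by positivity : (0:ℝ) < θ₀ * θ₀)]
    have e9 : 2/θ₀^2 * δ ^ ((k:ℝ) + 2 + 1/k) * (θ₀ * θ₀) = 2 * δ ^ ((k:ℝ) + 2 + 1/k) := by
      field_simp
    rw [e9]
    linarith [hrp]
  · -- second claim
    have himg : IsGreatest ((fun κ => |θ * (κ - θ₀) ^ (k + 1) - κ * δ ^ (k + 1)|) '' Set.Ioc θ₀ θ)
        (g t) := by
      constructor
      · refine ⟨θ₀ + t, ⟨by linarith, by rw [hθeq]; linarith⟩, ?_⟩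
        dsimp only
        rw [show θ₀ + t - θ₀ = t by ring,
          abs_of_nonpos (by simp only [hgdef] at hgt0; linarith)]
        simp only [hgdef]; ring
      · rintro y ⟨κ, ⟨hκ1, hκ2⟩, rfl⟩
        dsimp only
        have hs : 0 < κ - θ₀ := by linarith
        have hsδ : κ - θ₀ ≤ δ := by rw [hδdef]; linarith
        have h9 := hg0 (κ - θ₀) hs hsδ
        have h10 := hub (κ - θ₀) hs.le
        simp only [hgdef] at h9 h10 ⊢
        have e : (θ₀ + (κ - θ₀)) * δ ^ (k+1) = κ * δ ^ (k+1) := by ring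
        rw [abs_of_nonpos (by linarith)]
        linarith
    rw [himg.csSup_eq]
    have hcT : 0 ≤ ((k:ℝ)/((k:ℝ)+1)) * (t * δ ^ (k+1)) := by positivity
    have hcT2 : ((k:ℝ)/((k:ℝ)+1)) * (t * δ ^ (k+1)) ≤ δ ^ (k+2) := by
      have h10 : t * δ ^ (k+1) ≤ δ ^ (k+2) := by
        calc t * δ ^ (k+1) ≤ δ * δ ^ (k+1) :=
              mul_le_mul_of_nonneg_right htδ (by positivity)
          _ = δ ^ (k+2) := by ring
      have hk2' : ((k:ℝ)/((k:ℝ)+1)) ≤ 1 := by rw [div_le_one hk1]; linarith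
      calc ((k:ℝ)/((k:ℝ)+1)) * (t * δ ^ (k+1))
          ≤ t * δ ^ (k+1) := mul_le_of_le_one_left (by positivity) hk2'
        _ ≤ δ ^ (k+2) := h10
    have e7 : 1/θ * g t - δ ^ (k+1)
        = (((k:ℝ)/((k:ℝ)+1)) * (t * δ ^ (k+1)) - δ ^ (k+2)) / θ := by
      rw [hgt, eq_div_iff hθ.ne', hθeq]
      field_simp
      ring
    rw [e7]
    have hD : (0:ℝ) ≤ δ ^ (k+2) := by positivity
    have h11 : |((k:ℝ)/((k:ℝ)+1)) * (t * δ ^ (k+1)) - δ ^ (k+2)| ≤ 2 * δ ^ (k+2) :=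
      abs_le.2 ⟨by linarith, by linarith⟩
    rw [abs_div, abs_of_pos hθ]
    have hfrac2 : |((k:ℝ)/((k:ℝ)+1)) * (t * δ ^ (k+1)) - δ ^ (k+2)| / θ
        ≤ (2 * δ ^ (k+2)) / θ₀ := div_le_div₀ (by positivity) h11 h0 hθl.le
    refine hfrac2.trans ?_
    rw [div_le_iff₀ h0]
    have e10 : 2/θ₀^2 * δ ^ (k+2) * θ₀ = 2/θ₀ * δ ^ (k+2) := by
      field_simp
    rw [e10]
    have h12 : (1:ℝ) ≤ 1/θ₀ := by rw [le_div_iff₀ h0]; linarith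
    have h13 := mul_le_mul_of_nonneg_right h12 hD
    calc 2 * δ ^ (k+2) = 2 * (1 * δ ^ (k+2)) := by ring
      _ ≤ 2 * (1/θ₀ * δ ^ (k+2)) := by linarith
      _ = 2/θ₀ * δ ^ (k+2) := by ring
end
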